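/- arXiv:1708.05584 — 2 statements merged into one kernel-verified Lean document; each statement's English description precedes it below -/
import Mathlib

section
/- If V1 has finite first moment E[V1] < ∞, then sup over 0 ≤ s < t < ∞ of |n^{-1}·Γ_n(s,t] − E[V1]·(F(t) − F(s))| converges to 0 almost surely as n → ∞. -/
open MeasureTheory ProbabilityTheory Set Filter

lemma unif_conv
    (g : ℕ → ℝ → ℝ) (tot : ℕ → ℝ) (h : ℝ → ℝ) (c : ℝ)
    (hgmono : ∀ n, Monotone (g n))
    (hgle : ∀ n u, g n u ≤ tot n)
    (hgzero : ∀ n (u : ℝ), u < 0 → g n u = 0)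
    (hhmono : Monotone h) (hhcont : Continuous h)
    (hhle : ∀ u, h u ≤ c)
    (hhzero : ∀ u : ℝ, u < 0 → h u = 0)
    (hhtop : ∀ ε > (0:ℝ), ∃ b : ℚ, (0:ℝ) ≤ (b:ℝ) ∧ c - h b ≤ ε)
    (hconv : ∀ q : ℚ, Tendsto (fun n => g n q) atTop (nhds (h q)))
    (htot : Tendsto tot atTop (nhds c)) :
    ∀ ε > (0:ℝ), ∀ᶠ n in atTop, ∀ u : ℝ, |g n u - h u| ≤ ε := by
  intro ε hε
  obtain ⟨b, hb0, hbtail⟩ := hhtop (ε / 2) (by positivity)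
  have hcov : ∀ u : ↥(Icc (0:ℝ) (b:ℝ)), ∃ r : ℚ × ℚ,
      ((r.1:ℝ) < (u:ℝ) ∧ (u:ℝ) < (r.2:ℝ)) ∧ h r.2 - h r.1 ≤ ε / 2 := by
    intro u
    obtain ⟨δ, hδ, hδ'⟩ := Metric.continuous_iff.1 hhcont (u:ℝ) (ε / 4) (by positivity)
    obtain ⟨p, hp1, hp2⟩ := exists_rat_btwn (show (u:ℝ) - δ < u by linarith)
    obtain ⟨q, hq1, hq2⟩ := exists_rat_btwn (show (u:ℝ) < (u:ℝ) + δ by linarith)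
    refine ⟨(p, q), ⟨hp2, hq1⟩, ?_⟩
    have h1 : |h p - h u| < ε / 4 := by
      have : dist (p:ℝ) (u:ℝ) < δ := by rw [Real.dist_eq]; rw [abs_lt]; constructor <;> linarith
      have := hδ' _ this; rwa [Real.dist_eq] at this
    have h2 : |h q - h u| < ε / 4 := by
      have : dist (q:ℝ) (u:ℝ) < δ := by rw [Real.dist_eq]; rw [abs_lt]; constructor <;> linarith
      have := hδ' _ this; rwa [Real.dist_eq] at this
    rw [abs_lt] at h1 h2; linarith [h1.1, h1.2, h2.1, h2.2]
  classical
  choose r hr1 hr2 using hcov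
  obtain ⟨t, ht⟩ := isCompact_Icc.elim_finite_subcover
    (fun u : ↥(Icc (0:ℝ) (b:ℝ)) => Ioo ((r u).1 : ℝ) ((r u).2 : ℝ)) (fun _ => isOpen_Ioo)
    (by intro u hu; exact mem_iUnion.2 ⟨⟨u, hu⟩, hr1 ⟨u, hu⟩⟩)
  have E1 : ∀ᶠ n in atTop, |tot n - c| ≤ ε / 2 := by
    filter_upwards [htot (Metric.closedBall_mem_nhds c (by positivity : (0:ℝ) < ε/2))] with n hn
    simpa [Real.dist_eq] using hn
  have E2 : ∀ᶠ n in atTop, |g n b - h b| ≤ ε / 2 := by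
    filter_upwards [hconv b (Metric.closedBall_mem_nhds _ (by positivity : (0:ℝ) < ε/2))] with n hn
    simpa [Real.dist_eq] using hn
  have E3 : ∀ᶠ n in atTop, ∀ u ∈ t, |g n ((r u).1 : ℝ) - h ((r u).1 : ℝ)| ≤ ε / 2 ∧
      |g n ((r u).2 : ℝ) - h ((r u).2 : ℝ)| ≤ ε / 2 := by
    rw [eventually_all_finset]
    intro u _
    filter_upwards [hconv (r u).1 (Metric.closedBall_mem_nhds _ (by positivity : (0:ℝ) < ε/2)),
      hconv (r u).2 (Metric.closedBall_mem_nhds _ (by positivity : (0:ℝ) < ε/2))] with n hn1 hn2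
    exact ⟨by simpa [Real.dist_eq] using hn1, by simpa [Real.dist_eq] using hn2⟩
  filter_upwards [E1, E2, E3] with n h1 h2 h3
  intro u
  rcases lt_or_ge u 0 with hu | hu
  · rw [hgzero n u hu, hhzero u hu]; simpa using le_of_lt hε
  rcases le_or_gt u (b:ℝ) with hub | hub
  · have hum : u ∈ Icc (0:ℝ) (b:ℝ) := ⟨hu, hub⟩
    obtain ⟨v, hv⟩ := mem_iUnion.1 (ht hum)
    rw [mem_iUnion] at hv
    obtain ⟨hvt, huv⟩ := hv
    obtain ⟨hb1, hb2⟩ := h3 v hvt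
    have hosc := hr2 v
    rw [abs_le] at hb1 hb2 ⊢
    constructor
    · have g1 : g n ((r v).1 : ℝ) ≤ g n u := hgmono n (le_of_lt huv.1)
      have m1 : h u ≤ h ((r v).2 : ℝ) := hhmono (le_of_lt huv.2)
      linarith [hb1.1]
    · have g2 : g n u ≤ g n ((r v).2 : ℝ) := hgmono n (le_of_lt huv.2)
      have m2 : h ((r v).1 : ℝ) ≤ h u := hhmono (le_of_lt huv.1)
      linarith [hb2.2]
  · rw [abs_le] at h1 h2 ⊢
    have g1 : g n u ≤ tot n := hgle n u
    have g2 : g n (b:ℝ) ≤ g n u := hgmono n (le_of_lt hub)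
    have m1 : h (b:ℝ) ≤ h u := hhmono (le_of_lt hub)
    have m2 : h u ≤ c := hhle u
    constructor <;> linarith [h1.1, h1.2, h2.1, h2.2]

/-- functional strong law of large numbers for the offered work,
uniformly over all intervals `(s,t]`. -/
theorem offered_work_FSLLN
    {Ω : Type*} [MeasurableSpace Ω] (P : Measure Ω) [IsProbabilityMeasure P]
    (T V : ℕ → Ω → ℝ)
    (hTmeas : ∀ i, Measurable (T i)) (hVmeas : ∀ i, Measurable (V i))
    (hident : ∀ i, IdentDistrib (fun ω => (T i ω, V i ω)) (fun ω => (T 0 ω, V 0 ω)) P P)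
    (hindep : iIndepFun
      (fun i ω => (T i ω, V i ω)) P)
    (hTV : IndepFun (T 0) (V 0) P)
    (hTnn : ∀ i ω, 0 ≤ T i ω) (hVnn : ∀ i ω, 0 ≤ V i ω)
    (hV1 : Integrable (V 0) P)
    (F : ℝ → ℝ) (hF : ∀ u, F u = (P {ω | T 0 ω ≤ u}).toReal) (hFcont : Continuous F) :
    ∀ᵐ ω ∂P, Tendsto
      (fun n : ℕ => sSup {x : ℝ | ∃ s t : ℝ, 0 ≤ s ∧ s < t ∧
        x = |(1 / (n : ℝ)) * (∑ i ∈ Finset.range n, if T i ω ∈ Ioc s t then V i ω else 0)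
              - (∫ v, V 0 v ∂P) * (F t - F s)|})
      atTop (nhds 0) := by
  classical
  set c : ℝ := ∫ v, V 0 v ∂P with hc_def
  have hc : 0 ≤ c := integral_nonneg (fun ω => hVnn 0 ω)
  -- pointwise SLLN at each level u
  have key : ∀ u : ℝ, ∀ᵐ ω ∂P, Tendsto
      (fun n : ℕ => (∑ i ∈ Finset.range n, if T i ω ≤ u then V i ω else 0) / n)
      atTop (nhds (c * F u)) := by
    intro u
    set f : ℝ × ℝ → ℝ := fun p => if p.1 ≤ u then p.2 else 0 with hf_def
    have hfm : Measurable f :=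
      Measurable.ite (measurableSet_le measurable_fst measurable_const)
        measurable_snd measurable_const
    set X : ℕ → Ω → ℝ := fun i ω => f (T i ω, V i ω) with hX_def
    have hXm : ∀ i, Measurable (X i) := fun i => hfm.comp ((hTmeas i).prodMk (hVmeas i))
    have hint : Integrable (X 0) P := by
      refine hV1.mono' (hXm 0).aestronglyMeasurable (ae_of_all _ fun ω => ?_)
      simp only [hX_def, hf_def, Real.norm_eq_abs]
      split_ifs
      · exact le_of_eq (abs_of_nonneg (hVnn 0 ω))
      · simpa using hVnn 0 ω
    have hpind : Pairwise (Function.onFun (IndepFun · · P) X) :=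
      fun i j hij => (hindep.indepFun hij).comp hfm hfm
    have hid : ∀ i, IdentDistrib (X i) (X 0) P P := fun i => (hident i).comp hfm
    have hmean : ∫ ω, X 0 ω ∂P = c * F u := by
      have hindm : Measurable (fun x : ℝ => if x ≤ u then (1:ℝ) else 0) :=
        Measurable.ite measurableSet_Iic measurable_const measurable_const
      have hind : IndepFun (fun ω => if T 0 ω ≤ u then (1:ℝ) else 0) (V 0) P :=
        hTV.comp hindm measurable_id
      have heq : ∀ ω, X 0 ω = (if T 0 ω ≤ u then (1:ℝ) else 0) * V 0 ω := by
        intro ω; simp only [hX_def, hf_def]; split_ifs <;> simp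
      have h1 : ∫ ω, X 0 ω ∂P
          = (∫ ω, (if T 0 ω ≤ u then (1:ℝ) else 0) ∂P) * (∫ ω, V 0 ω ∂P) := by
        rw [show (fun ω => X 0 ω) = fun ω => (if T 0 ω ≤ u then (1:ℝ) else 0) * V 0 ω
          from funext heq]
        exact hind.integral_fun_mul_eq_mul_integral
          ((hindm.comp (hTmeas 0)).aestronglyMeasurable) hV1.1
      have h2 : (∫ ω, (if T 0 ω ≤ u then (1:ℝ) else 0) ∂P) = F u := by
        have : (fun ω => if T 0 ω ≤ u then (1:ℝ) else 0)
            = Set.indicator {ω | T 0 ω ≤ u} (fun _ => (1:ℝ)) := by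
          ext ω; simp [Set.indicator_apply]
        rw [this]
        rw [hF u]
        exact integral_indicator_one (measurableSet_le (hTmeas 0) measurable_const)
      rw [h1, h2, ← hc_def, mul_comm]
    have := strong_law_ae_real X hint hpind hid
    rw [hmean] at this
    filter_upwards [this] with ω hω
    exact hω
  -- SLLN for the total mass
  have htotal : ∀ᵐ ω ∂P, Tendsto
      (fun n : ℕ => (∑ i ∈ Finset.range n, V i ω) / n) atTop (nhds c) := by
    have hpind : Pairwise (Function.onFun (IndepFun · · P) V) :=
      fun i j hij => (hindep.indepFun hij).comp measurable_snd measurable_snd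
    have hid : ∀ i, IdentDistrib (V i) (V 0) P P := fun i => (hident i).comp measurable_snd
    have := strong_law_ae_real V hV1 hpind hid
    filter_upwards [this] with ω hω
    exact hω
  -- properties of F
  have hFmono : Monotone F := by
    intro a b hab
    rw [hF a, hF b]
    refine ENNReal.toReal_mono (measure_ne_top P _) (measure_mono ?_)
    intro ω hω
    simp only [mem_setOf_eq] at *
    exact le_trans hω hab
  have hFle1 : ∀ u, F u ≤ 1 := by
    intro u
    rw [hF u]
    have := measure_mono (subset_univ {ω | T 0 ω ≤ u}) (μ := P)
    rw [measure_univ] at this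
    simpa using ENNReal.toReal_mono ENNReal.one_ne_top this
  have hFzero : ∀ u : ℝ, u < 0 → F u = 0 := by
    intro u hu
    rw [hF u]
    have : {ω | T 0 ω ≤ u} = ∅ := by
      ext ω; simp only [mem_setOf_eq, mem_empty_iff_false, iff_false]
      intro hle
      exact absurd (lt_of_le_of_lt hle hu) (not_lt.2 (hTnn 0 ω))
    simp [this]
  have hhtop : ∀ ε > (0:ℝ), ∃ b : ℚ, (0:ℝ) ≤ (b:ℝ) ∧ c - c * F b ≤ ε := by
    intro ε hε
    have h1 : Tendsto (fun n : ℕ => P {ω | T 0 ω ≤ (n:ℝ)}) atTop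
        (nhds (P (⋃ n : ℕ, {ω | T 0 ω ≤ (n:ℝ)}))) :=
      tendsto_measure_iUnion_atTop (by
        intro a b hab ω hω
        simp only [mem_setOf_eq] at *
        exact le_trans hω (by exact_mod_cast hab))
    have h2 : (⋃ n : ℕ, {ω | T 0 ω ≤ (n:ℝ)}) = univ := by
      apply eq_univ_of_forall
      intro ω
      obtain ⟨n, hn⟩ := exists_nat_ge (T 0 ω)
      exact mem_iUnion.2 ⟨n, hn⟩
    rw [h2, measure_univ] at h1
    have h3 : Tendsto (fun n : ℕ => F (n:ℝ)) atTop (nhds 1) := by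
      have := (ENNReal.tendsto_toReal ENNReal.one_ne_top).comp h1
      simpa [Function.comp_def, hF] using this
    have h4 : Tendsto (fun n : ℕ => c * F (n:ℝ)) atTop (nhds c) := by
      simpa using h3.const_mul c
    obtain ⟨N, hN⟩ := eventually_atTop.1
      (h4 (Metric.closedBall_mem_nhds c hε))
    have hd := hN N le_rfl
    simp only [Metric.mem_closedBall, Real.dist_eq] at hd
    refine ⟨(N : ℚ), by positivity, ?_⟩
    rw [abs_le] at hd
    have : ((N : ℚ) : ℝ) = (N : ℝ) := by push_cast; ring
    rw [this]
    linarith [hd.1]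
  -- assemble
  filter_upwards [ae_all_iff.2 (fun q : ℚ => key (q:ℝ)), htotal] with ω hA hB
  have U := unif_conv
    (fun n u => (∑ i ∈ Finset.range n, if T i ω ≤ u then V i ω else 0) / n)
    (fun n => (∑ i ∈ Finset.range n, V i ω) / n)
    (fun u => c * F u) c
    (by
      intro n a b hab
      have hs : (∑ i ∈ Finset.range n, if T i ω ≤ a then V i ω else 0)
          ≤ ∑ i ∈ Finset.range n, if T i ω ≤ b then V i ω else 0 := by
        refine Finset.sum_le_sum fun i _ => ?_
        by_cases h1 : T i ω ≤ a
        · rw [if_pos h1, if_pos (h1.trans hab)]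
        · rw [if_neg h1]
          by_cases h2 : T i ω ≤ b
          · rw [if_pos h2]; exact hVnn i ω
          · rw [if_neg h2]
      exact div_le_div_of_nonneg_right hs (Nat.cast_nonneg n))
    (by
      intro n u
      have hs : (∑ i ∈ Finset.range n, if T i ω ≤ u then V i ω else 0)
          ≤ ∑ i ∈ Finset.range n, V i ω := by
        refine Finset.sum_le_sum fun i _ => ?_
        split_ifs
        · exact le_rfl
        · exact hVnn i ω
      exact div_le_div_of_nonneg_right hs (Nat.cast_nonneg n))
    (by
      intro n u hu
      have : (∑ i ∈ Finset.range n, if T i ω ≤ u then V i ω else 0) = 0 := by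
        refine Finset.sum_eq_zero fun i _ => ?_
        rw [if_neg]
        intro hle
        exact absurd (lt_of_le_of_lt hle hu) (not_lt.2 (hTnn i ω))
      rw [this, zero_div])
    (fun a b hab => mul_le_mul_of_nonneg_left (hFmono hab) hc)
    (continuous_const.mul hFcont)
    (fun u => by
      have := mul_le_mul_of_nonneg_left (hFle1 u) hc
      simpa using this)
    (fun u hu => by rw [hFzero u hu, mul_zero])
    hhtop
    (fun q => hA q)
    hB
  rw [Metric.tendsto_atTop]
  intro ε hε
  obtain ⟨N, hN⟩ := eventually_atTop.1 (U (ε / 4) (by positivity))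
  refine ⟨N, fun n hn => ?_⟩
  set D := {x : ℝ | ∃ s t : ℝ, 0 ≤ s ∧ s < t ∧
      x = |(1 / (n : ℝ)) * (∑ i ∈ Finset.range n, if T i ω ∈ Ioc s t then V i ω else 0)
            - c * (F t - F s)|} with hD_def
  have hexp : ∀ s t : ℝ, s ≤ t →
      (1 / (n : ℝ)) * (∑ i ∈ Finset.range n, if T i ω ∈ Ioc s t then V i ω else 0)
      = (∑ i ∈ Finset.range n, if T i ω ≤ t then V i ω else 0) / n
        - (∑ i ∈ Finset.range n, if T i ω ≤ s then V i ω else 0) / n := by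
    intro s t hst
    have hterm : ∀ i, (if T i ω ∈ Ioc s t then V i ω else 0)
        = (if T i ω ≤ t then V i ω else 0) - (if T i ω ≤ s then V i ω else 0) := by
      intro i
      simp only [mem_Ioc]
      by_cases h1 : T i ω ≤ s
      · rw [if_neg (fun hcon => absurd hcon.1 (not_lt.2 h1)), if_pos (h1.trans hst),
          if_pos h1, sub_self]
      · by_cases h2 : T i ω ≤ t
        · rw [if_pos ⟨not_le.1 h1, h2⟩, if_pos h2, if_neg h1, sub_zero]
        · rw [if_neg (fun hcon => h2 hcon.2), if_neg h2, if_neg h1, sub_zero]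
    rw [Finset.sum_congr rfl (fun i _ => hterm i), Finset.sum_sub_distrib,
      one_div, inv_mul_eq_div, sub_div]
  have hub : ∀ x ∈ D, x ≤ ε / 2 := by
    rintro x ⟨s, t, hs0, hst, rfl⟩
    rw [hexp s t (le_of_lt hst)]
    have b1 := hN n hn t
    have b2 := hN n hn s
    have heq : ((∑ i ∈ Finset.range n, if T i ω ≤ t then V i ω else 0) / ↑n
        - (∑ i ∈ Finset.range n, if T i ω ≤ s then V i ω else 0) / ↑n)
        - c * (F t - F s)
        = ((∑ i ∈ Finset.range n, if T i ω ≤ t then V i ω else 0) / ↑n - c * F t)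
          - ((∑ i ∈ Finset.range n, if T i ω ≤ s then V i ω else 0) / ↑n - c * F s) := by
      ring
    rw [heq]
    refine le_trans (abs_sub _ _) ?_
    linarith
  have hmem : |(1 / (n : ℝ)) * (∑ i ∈ Finset.range n, if T i ω ∈ Ioc 0 1 then V i ω else 0)
      - c * (F 1 - F 0)| ∈ D := ⟨0, 1, le_rfl, zero_lt_one, rfl⟩
  have hbdd : BddAbove D := ⟨ε / 2, fun x hx => hub x hx⟩
  have h0 : 0 ≤ sSup D := le_trans (abs_nonneg _) (le_csSup hbdd hmem)
  have h1 : sSup D ≤ ε / 2 := csSup_le ⟨_, hmem⟩ hub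
  rw [Real.dist_eq, sub_zero, abs_of_nonneg h0]
  linarith
end

section
/- With the setup of the periodic model with general service and σ_V² < 1 (normalizing E[V1²] = 1), the transient distribution P(Ŵ(t) ≤ λ) = φ(λ,a)·Φ(a) + (2π)^{-1/2}·∫_a^∞ φ(λ − σ_V(p_t−1)x, a)·e^{−x²/2} dx converges as t → ∞ to 1 − Φ(a)·exp(−2λ(λ+a) + 2λ²σ_V²), where φ(λ,a) = 1 − exp(−2λ(λ+a) + 2λ²σ_V²). -/
open MeasureTheory Set Filter

/-- The standard normal cumulative distribution function. -/
noncomputable def stdNormalCDF (x : ℝ) : ℝ :=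
  (Real.sqrt (2 * Real.pi))⁻¹ * ∫ u in Iic x, Real.exp (-u ^ 2 / 2)

/-- convergence of the transient distribution of the periodic workload to its
steady state: with φ(λ,a) = 1 − exp(−2λ(λ+a) + 2λ²σ_V²) (E[V₁²]=1 normalization) and
p_t = ⌈t⌉, the transient distribution converges to 1 − Φ(a)·exp(−2λ(λ+a) + 2λ²σ_V²). -/
theorem periodic_workload_transient_to_steady_state
    (σV a lam : ℝ) (hσV : 0 < σV) (hσV1 : σV ^ 2 < 1) (ha : 0 < a) (hlam : 0 < lam)
    (φf : ℝ → ℝ → ℝ)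
    (hφf : ∀ l b : ℝ, φf l b = 1 - Real.exp (-(2 * l * (l + b)) + 2 * l ^ 2 * σV ^ 2)) :
    Tendsto (fun t : ℝ =>
        φf lam a * stdNormalCDF a + (Real.sqrt (2 * Real.pi))⁻¹ *
          ∫ x in Ioi a, φf (lam - σV * ((⌈t⌉ : ℝ) - 1) * x) a * Real.exp (-x ^ 2 / 2))
      atTop
      (nhds (1 - stdNormalCDF a
        * Real.exp (-(2 * lam * (lam + a)) + 2 * lam ^ 2 * σV ^ 2))) := by
  have hs0 : 0 < 1 - σV ^ 2 := by nlinarith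
  set C : ℝ := Real.exp (a ^ 2 / (2 * (1 - σV ^ 2))) with hC
  -- uniform bound on the exponential
  have hgbound : ∀ l : ℝ, Real.exp (-(2 * l * (l + a)) + 2 * l ^ 2 * σV ^ 2) ≤ C := by
    intro l
    apply Real.exp_le_exp.2
    rw [le_div_iff₀ (by positivity : (0:ℝ) < 2 * (1 - σV ^ 2))]
    nlinarith [sq_nonneg (2 * (1 - σV ^ 2) * l + a)]
  have hgpos : ∀ l : ℝ, 0 < Real.exp (-(2 * l * (l + a)) + 2 * l ^ 2 * σV ^ 2) :=
    fun l => Real.exp_pos _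
  -- g tends to 0 at -infinity
  have hgzero : Tendsto (fun l : ℝ => Real.exp (-(2 * l * (l + a)) + 2 * l ^ 2 * σV ^ 2))
      atBot (nhds 0) := by
    apply squeeze_zero' (Eventually.of_forall fun l => (hgpos l).le)
      _ Real.tendsto_exp_atBot
    filter_upwards [eventually_le_atBot (-(2 * a + 1) / (2 * (1 - σV ^ 2)))] with l hl
    apply Real.exp_le_exp.2
    have h1 : l * (2 * (1 - σV ^ 2)) ≤ -(2 * a + 1) := by
      rw [← le_div_iff₀ (by positivity : (0:ℝ) < 2 * (1 - σV ^ 2))]; exact hl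
    have hl0 : l ≤ 0 := by nlinarith
    nlinarith [mul_nonneg (neg_nonneg.2 hl0)
      (by nlinarith : (0:ℝ) ≤ -(2 * (1 - σV ^ 2) * l + 2 * a + 1))]
  -- convergence of the integral
  have hceil : Tendsto (fun t : ℝ => (⌈t⌉ : ℝ)) atTop atTop :=
    tendsto_atTop_mono (fun t => Int.le_ceil t) tendsto_id
  have hInt : Tendsto (fun t : ℝ =>
      ∫ x in Ioi a, φf (lam - σV * ((⌈t⌉ : ℝ) - 1) * x) a * Real.exp (-x ^ 2 / 2)) atTop
      (nhds (∫ x in Ioi a, Real.exp (-x ^ 2 / 2))) := by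
    apply tendsto_integral_filter_of_dominated_convergence
      (fun x => (1 + C) * Real.exp (-x ^ 2 / 2))
    · filter_upwards with t
      apply Continuous.aestronglyMeasurable
      have : (fun x : ℝ => φf (lam - σV * ((⌈t⌉ : ℝ) - 1) * x) a * Real.exp (-x ^ 2 / 2))
          = fun x : ℝ => (1 - Real.exp (-(2 * (lam - σV * ((⌈t⌉ : ℝ) - 1) * x) *
            ((lam - σV * ((⌈t⌉ : ℝ) - 1) * x) + a)) +
            2 * (lam - σV * ((⌈t⌉ : ℝ) - 1) * x) ^ 2 * σV ^ 2)) * Real.exp (-x ^ 2 / 2) := by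
        funext x; rw [hφf]
      rw [this]
      fun_prop
    · filter_upwards with t
      filter_upwards with x
      rw [norm_mul, Real.norm_eq_abs, Real.norm_eq_abs, abs_of_pos (Real.exp_pos _)]
      gcongr
      rw [hφf]
      calc |1 - Real.exp _| ≤ |(1:ℝ)| + |Real.exp _| := abs_sub _ _
        _ ≤ 1 + C := by
            rw [abs_one, abs_of_pos (Real.exp_pos _)]
            exact add_le_add (le_refl 1) (hgbound _)
    · have h1 : (fun x : ℝ => (1 + C) * Real.exp (-x ^ 2 / 2))
          = fun x => (1 + C) * Real.exp (-(1/2) * x ^ 2) := by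
        funext x; congr 2; ring
      rw [h1]
      exact ((integrable_exp_neg_mul_sq (by norm_num : (0:ℝ) < 1/2)).const_mul (1 + C)).restrict
    · rw [ae_restrict_iff' measurableSet_Ioi]
      filter_upwards with x hx
      have hx' : a < x := hx
      -- lam - σV * (⌈t⌉ - 1) * x → -∞
      have hlt : Tendsto (fun t : ℝ => lam - σV * ((⌈t⌉ : ℝ) - 1) * x) atTop atBot := by
        have h2 : Tendsto (fun t : ℝ => σV * ((⌈t⌉ : ℝ) - 1) * x) atTop atTop := by
          have h3 : Tendsto (fun t : ℝ => (⌈t⌉ : ℝ) - 1) atTop atTop :=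
            tendsto_atTop_add_const_right _ _ hceil
          have h4 := h3.const_mul_atTop hσV
          have h5 := h4.atTop_mul_const (lt_trans ha hx')
          simpa [mul_assoc] using h5
        simpa [sub_eq_add_neg] using tendsto_atBot_add_const_left atTop lam (tendsto_neg_atTop_atBot.comp h2)
      have hφlim : Tendsto (fun t : ℝ => φf (lam - σV * ((⌈t⌉ : ℝ) - 1) * x) a) atTop
          (nhds 1) := by
        have := (hgzero.comp hlt).const_sub 1
        simp only [sub_zero] at this
        convert this using 2 with t
        rw [hφf]
        rfl
      have := hφlim.mul_const (Real.exp (-x ^ 2 / 2))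
      simpa using this
  -- total integral of the Gaussian
  have hsqrt : Real.sqrt (2 * Real.pi) ≠ 0 := by positivity
  have hIntegrable : Integrable (fun x : ℝ => Real.exp (-x ^ 2 / 2)) := by
    have h1 : (fun x : ℝ => Real.exp (-x ^ 2 / 2)) = fun x => Real.exp (-(1/2) * x ^ 2) := by
      funext x; congr 1; ring
    rw [h1]; exact integrable_exp_neg_mul_sq (by norm_num)
  have htot : (∫ x in Iic a, Real.exp (-x ^ 2 / 2)) + (∫ x in Ioi a, Real.exp (-x ^ 2 / 2))
      = Real.sqrt (2 * Real.pi) := by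
    rw [intervalIntegral.integral_Iic_add_Ioi hIntegrable.integrableOn hIntegrable.integrableOn]
    have h1 : (fun x : ℝ => Real.exp (-x ^ 2 / 2)) = fun x => Real.exp (-(1/2) * x ^ 2) := by
      funext x; congr 1; ring
    rw [h1, integral_gaussian]
    congr 1
    rw [div_div_eq_mul_div, div_one]
    ring
  -- final assembly
  have key : 1 - stdNormalCDF a * Real.exp (-(2 * lam * (lam + a)) + 2 * lam ^ 2 * σV ^ 2)
      = φf lam a * stdNormalCDF a + (Real.sqrt (2 * Real.pi))⁻¹ *
        ∫ x in Ioi a, Real.exp (-x ^ 2 / 2) := by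
    rw [hφf]
    unfold stdNormalCDF
    have h2 : (∫ x in Ioi a, Real.exp (-x ^ 2 / 2))
        = Real.sqrt (2 * Real.pi) - ∫ x in Iic a, Real.exp (-x ^ 2 / 2) := by
      linarith [htot]
    rw [h2]
    field_simp
    ring
  rw [key]
  exact tendsto_const_nhds.add (hInt.const_mul _)
end
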